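/- There exists a universal constant C > 0 such that the following holds. Let r > 2 be a real number, let M := ⌈π r⌉, and set b_k := r (cos(2πk/M), sin(2πk/M)) ∈ ℝ² for 0 ≤ k ≤ M−1. For λ > 0 and N ∈ ℝ², define S_λ(N) := Σ_{k=0}^{M−1} exp( −(‖b_0 − b_k‖₂² + 2λ ⟨N, b_0 − b_k⟩) / (2λ²) ). Then for every λ ∈ (0, M/10) and every N ∈ ℝ², | log S_λ(N) − log(1+λ) | ≤ C (1 + ‖N‖₂²). -/

import Mathlib

open scoped RealInnerProductSpace

/-- The `k`-th of `M` equally spaced points on the circle of radius `r` in `ℝ²`. -/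
noncomputable def circpt (r : ℝ) (M k : ℕ) : EuclideanSpace ℝ (Fin 2) :=
  (WithLp.equiv 2 (Fin 2 → ℝ)).symm
    ![r * Real.cos (2 * Real.pi * k / M), r * Real.sin (2 * Real.pi * k / M)]

/-- The partition function `S_λ(N)` of the single-block log-likelihood ratio. -/
noncomputable def Spart (r : ℝ) (M : ℕ) (lam : ℝ) (N : EuclideanSpace ℝ (Fin 2)) : ℝ :=
  ∑ k ∈ Finset.range M,
    Real.exp (-(‖circpt r M 0 - circpt r M k‖ ^ 2
      + 2 * lam * ⟪N, circpt r M 0 - circpt r M k⟫) / (2 * lam ^ 2))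

private lemma circpt_norm (r : ℝ) (hr : 0 ≤ r) (M k : ℕ) (hk : k ≤ M) (hM : 0 < M) :
    ‖circpt r M 0 - circpt r M k‖ = 2 * r * Real.sin (Real.pi * k / M) := by
  have hMR : (0:ℝ) < M := by exact_mod_cast hM
  have hang0 : 0 ≤ Real.pi * k / M := by positivity
  have hang1 : Real.pi * k / M ≤ Real.pi := by
    rw [div_le_iff₀ hMR]
    have : (k:ℝ) ≤ M := by exact_mod_cast hk
    nlinarith [Real.pi_pos]
  have hs : 0 ≤ Real.sin (Real.pi * k / M) :=
    Real.sin_nonneg_of_nonneg_of_le_pi hang0 hang1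
  have hnn : 0 ≤ 2 * r * Real.sin (Real.pi * k / M) := by positivity
  rw [EuclideanSpace.norm_eq]
  have hcoord : ∑ i : Fin 2, ‖(circpt r M 0 - circpt r M k) i‖ ^ 2
      = (2 * r * Real.sin (Real.pi * k / M)) ^ 2 := by
    have hc : Real.cos (2 * Real.pi * k / M)
        = 2 * Real.cos (Real.pi * k / M) ^ 2 - 1 := by
      rw [show 2 * Real.pi * (k:ℝ) / M = 2 * (Real.pi * k / M) by ring]
      exact Real.cos_two_mul _
    have h1 := Real.sin_sq_add_cos_sq (2 * Real.pi * k / M)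
    have h2 := Real.sin_sq_add_cos_sq (Real.pi * k / M)
    simp only [circpt, Fin.sum_univ_two, PiLp.sub_apply, WithLp.equiv_symm_apply, PiLp.toLp_apply, WithLp.ofLp_toLp,
      Matrix.cons_val_zero, Matrix.cons_val_one, Matrix.head_cons, Nat.cast_zero,
      mul_zero, zero_div, Real.cos_zero, Real.sin_zero, Real.norm_eq_abs, sq_abs]
    nlinarith [h1, h2, hc, sq_nonneg r]
  rw [hcoord, Real.sqrt_sq hnn]

private lemma circpt_norm_nonneg (r : ℝ) (M k : ℕ) :
    0 ≤ ‖circpt r M 0 - circpt r M k‖ := norm_nonneg _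

/-- Upper bound: the chord length is at most `2k`. -/
private lemma circpt_norm_le (r : ℝ) (hr : 2 < r) (k : ℕ)
    (hk : k ≤ Nat.ceil (Real.pi * r)) :
    ‖circpt r (Nat.ceil (Real.pi * r)) 0 - circpt r (Nat.ceil (Real.pi * r)) k‖
      ≤ 2 * k := by
  set M : ℕ := Nat.ceil (Real.pi * r) with hMdef
  have hπ := Real.pi_pos
  have hr0 : (0:ℝ) < r := by linarith
  have hMreal : Real.pi * r ≤ (M:ℝ) := Nat.le_ceil _
  have hM0 : 0 < M := by
    have : (0:ℝ) < (M:ℝ) := lt_of_lt_of_le (by positivity) hMreal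
    exact_mod_cast this
  have hMR : (0:ℝ) < M := by exact_mod_cast hM0
  rw [circpt_norm r hr0.le M k hk hM0]
  have hsin : Real.sin (Real.pi * k / M) ≤ Real.pi * k / M :=
    Real.sin_le (by positivity)
  have h2 : 2 * r * (Real.pi * k / M) ≤ 2 * k := by
    rw [show 2 * r * (Real.pi * (k:ℝ) / M) = 2 * (k:ℝ) * (Real.pi * r) / M by ring,
      div_le_iff₀ hMR]
    nlinarith [Nat.cast_nonneg (α := ℝ) k, hMreal]
  calc 2 * r * Real.sin (Real.pi * k / M) ≤ 2 * r * (Real.pi * k / M) := by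
        nlinarith
    _ ≤ 2 * k := h2

/-- Lower bound: the chord length is at least `min k (M-k)`. -/
private lemma circpt_norm_ge (r : ℝ) (hr : 2 < r) (k : ℕ)
    (hk : k ≤ Nat.ceil (Real.pi * r)) :
    ((min k (Nat.ceil (Real.pi * r) - k) : ℕ) : ℝ)
      ≤ ‖circpt r (Nat.ceil (Real.pi * r)) 0 - circpt r (Nat.ceil (Real.pi * r)) k‖ := by
  set M : ℕ := Nat.ceil (Real.pi * r) with hMdef
  have hπ := Real.pi_pos
  have hr0 : (0:ℝ) < r := by linarith
  have hMreal : Real.pi * r ≤ (M:ℝ) := Nat.le_ceil _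
  have hM0 : 0 < M := by
    have : (0:ℝ) < (M:ℝ) := lt_of_lt_of_le (by positivity) hMreal
    exact_mod_cast this
  have hMR : (0:ℝ) < M := by exact_mod_cast hM0
  have hMlt : (M:ℝ) < Real.pi * r + 1 := Nat.ceil_lt_add_one (by positivity)
  have hM4r : (M:ℝ) ≤ 4 * r := by nlinarith [Real.pi_lt_d2]
  rw [circpt_norm r hr0.le M k hk hM0]
  set m : ℕ := min k (M - k) with hmdef
  have h2m : 2 * m ≤ M := by omega
  have hmk : (m:ℝ) ≤ k := by exact_mod_cast min_le_left _ _
  -- sin (π k / M) = sin (π m / M)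
  have hsin_eq : Real.sin (Real.pi * k / M) = Real.sin (Real.pi * m / M) := by
    rcases le_or_gt (2 * k) M with h | h
    · have : m = k := by omega
      rw [this]
    · have hmMk : m = M - k := by omega
      have hMk : ((M - k : ℕ) : ℝ) = (M:ℝ) - k := by
        have : k ≤ M := hk
        push_cast [Nat.cast_sub this]
        ring
      rw [hmMk, hMk, show Real.pi * ((M:ℝ) - k) / M = Real.pi - Real.pi * k / M by
        field_simp, Real.sin_pi_sub]
  rw [hsin_eq]
  have hang0 : 0 ≤ Real.pi * m / M := by positivity
  have hang1 : Real.pi * m / M ≤ Real.pi / 2 := by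
    rw [div_le_div_iff₀ hMR (by norm_num : (0:ℝ) < 2)]
    have : (2 * m : ℝ) ≤ M := by exact_mod_cast h2m
    nlinarith
  have hjordan : 2 / Real.pi * (Real.pi * m / M) ≤ Real.sin (Real.pi * m / M) :=
    Real.mul_le_sin hang0 hang1
  have hsimp : 2 / Real.pi * (Real.pi * m / M) = 2 * m / M := by
    field_simp
  rw [hsimp] at hjordan
  -- 2 r sin ≥ 2r * (2m/M) = 4 r m / M ≥ m  since M ≤ 4r
  have hm0 : (0:ℝ) ≤ m := Nat.cast_nonneg _
  have hfinal : (m:ℝ) ≤ 2 * r * (2 * m / M) := by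
    rw [show 2 * r * (2 * (m:ℝ) / M) = 4 * r * m / M by ring, le_div_iff₀ hMR]
    nlinarith
  calc (m:ℝ) ≤ 2 * r * (2 * m / M) := hfinal
    _ ≤ 2 * r * Real.sin (Real.pi * m / M) := by nlinarith

/-- Geometric sum bound. -/
private lemma geom_bound (q : ℝ) (h0 : 0 ≤ q) (h1 : q < 1) (n : ℕ) :
    ∑ i ∈ Finset.range n, q ^ i ≤ 1 / (1 - q) := by
  have h2 : 0 < 1 - q := by linarith
  rw [le_div_iff₀ h2]
  nlinarith [geom_sum_mul q n, pow_nonneg h0 n]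

private lemma geom_reflect_bound (q : ℝ) (h0 : 0 ≤ q) (h1 : q < 1) (M : ℕ) :
    ∑ k ∈ Finset.range M, q ^ (M - k) ≤ 1 / (1 - q) := by
  have h2 : 0 < 1 - q := by linarith
  have hre := Finset.sum_range_reflect (fun k => q ^ (M - k)) M
  have hstep : ∑ j ∈ Finset.range M, q ^ (M - (M - 1 - j)) = ∑ j ∈ Finset.range M, q ^ (j + 1) := by
    apply Finset.sum_congr rfl
    intro j hj
    have hjM : j < M := Finset.mem_range.mp hj
    congr 1
    omega
  calc ∑ k ∈ Finset.range M, q ^ (M - k)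
      = ∑ j ∈ Finset.range M, q ^ (j + 1) := by rw [← hre, hstep]
    _ ≤ ∑ j ∈ Finset.range M, q ^ j := by
        apply Finset.sum_le_sum
        intro j _
        calc q ^ (j + 1) = q ^ j * q := by ring
          _ ≤ q ^ j * 1 := by
              apply mul_le_mul_of_nonneg_left h1.le (pow_nonneg h0 j)
          _ = q ^ j := by ring
    _ ≤ 1 / (1 - q) := geom_bound q h0 h1 M

set_option maxHeartbeats 1000000 in
/-- **Small-`λ` sandwich for the block partition function.** There is a universal constant
`C > 0` such that for every `r > 2`, with `M = ⌈πr⌉`, every `λ ∈ (0, M/10)` and every `N`,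
`|log S_λ(N) − log(1+λ)| ≤ C (1 + ‖N‖²)`. -/
theorem stmt14 :
    ∃ C : ℝ, 0 < C ∧
      ∀ r : ℝ, 2 < r →
        ∀ lam : ℝ, 0 < lam → lam < (Nat.ceil (Real.pi * r) : ℝ) / 10 →
          ∀ N : EuclideanSpace ℝ (Fin 2),
            |Real.log (Spart r (Nat.ceil (Real.pi * r)) lam N) - Real.log (1 + lam)|
              ≤ C * (1 + ‖N‖ ^ 2) := by
  refine ⟨4, by norm_num, ?_⟩
  intro r hr lam hlam hlamM N
  have hπ := Real.pi_pos
  have hr0 : (0:ℝ) < r := by linarith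
  set M : ℕ := Nat.ceil (Real.pi * r) with hMdef
  have hMreal : Real.pi * r ≤ (M:ℝ) := Nat.le_ceil _
  have hπr6 : (6:ℝ) < Real.pi * r := by nlinarith [Real.pi_gt_three]
  have hM6 : (6:ℝ) < (M:ℝ) := lt_of_lt_of_le hπr6 hMreal
  have hM0 : 0 < M := by
    have : (0:ℝ) < (M:ℝ) := by linarith
    exact_mod_cast this
  have hNnn : (0:ℝ) ≤ ‖N‖ := norm_nonneg N
  have hlam2 : (0:ℝ) < 2 * lam ^ 2 := by positivity
  set S : ℝ := Spart r M lam N with hSdef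
  -- positivity of S, in fact S ≥ 1
  have hS1 : 1 ≤ S := by
    rw [hSdef, Spart]
    have h0mem : 0 ∈ Finset.range M := Finset.mem_range.mpr hM0
    have hval : Real.exp (-(‖circpt r M 0 - circpt r M 0‖ ^ 2
        + 2 * lam * ⟪N, circpt r M 0 - circpt r M 0⟫) / (2 * lam ^ 2)) = 1 := by
      rw [sub_self]
      simp
    calc (1:ℝ) = Real.exp (-(‖circpt r M 0 - circpt r M 0‖ ^ 2
          + 2 * lam * ⟪N, circpt r M 0 - circpt r M 0⟫) / (2 * lam ^ 2)) := hval.symm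
      _ ≤ _ := Finset.single_le_sum
          (f := fun k => Real.exp (-(‖circpt r M 0 - circpt r M k‖ ^ 2
            + 2 * lam * ⟪N, circpt r M 0 - circpt r M k⟫) / (2 * lam ^ 2)))
          (fun k _ => (Real.exp_pos _).le) h0mem
  have hSpos : (0:ℝ) < S := lt_of_lt_of_le one_pos hS1
  -- ### Upper bound on S
  set q : ℝ := Real.exp (-(1 / (2 * lam))) with hqdef
  have hq0 : 0 ≤ q := (Real.exp_pos _).le
  have hq1 : q < 1 := by
    rw [hqdef]
    apply Real.exp_lt_one_iff.mpr
    have : (0:ℝ) < 1 / (2 * lam) := by positivity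
    linarith
  set B : ℝ := (‖N‖ + 1 / 2) ^ 2 / 2 with hBdef
  have hterm_ub : ∀ k ∈ Finset.range M,
      Real.exp (-(‖circpt r M 0 - circpt r M k‖ ^ 2
        + 2 * lam * ⟪N, circpt r M 0 - circpt r M k⟫) / (2 * lam ^ 2))
        ≤ Real.exp B * (q ^ k + q ^ (M - k)) := by
    intro k hk
    have hkM : k ≤ M := (Finset.mem_range.mp hk).le
    set d : ℝ := ‖circpt r M 0 - circpt r M k‖ with hddef
    set I : ℝ := ⟪N, circpt r M 0 - circpt r M k⟫ with hIdef
    have hd0 : 0 ≤ d := norm_nonneg _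
    have hmd : ((min k (M - k) : ℕ) : ℝ) ≤ d := circpt_norm_ge r hr k hkM
    have hI : -(‖N‖ * d) ≤ I := by
      have := abs_real_inner_le_norm N (circpt r M 0 - circpt r M k)
      rw [← hIdef, ← hddef] at this
      have := neg_abs_le I
      nlinarith [abs_real_inner_le_norm N (circpt r M 0 - circpt r M k), neg_abs_le I]
    have hkey : -(d ^ 2 + 2 * lam * I) / (2 * lam ^ 2) ≤ B - d / (2 * lam) := by
      rw [div_le_iff₀ hlam2, hBdef]
      have hprod : -(2 * lam * I) ≤ 2 * lam * (‖N‖ * d) := by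
        nlinarith [hI, hlam]
      have hexp : ((‖N‖ + 1 / 2) ^ 2 / 2 - d / (2 * lam)) * (2 * lam ^ 2)
          = lam ^ 2 * (‖N‖ + 1 / 2) ^ 2 - lam * d := by
        field_simp
      rw [hexp]
      nlinarith [sq_nonneg (d - lam * (‖N‖ + 1 / 2)), hprod]
    calc Real.exp (-(d ^ 2 + 2 * lam * I) / (2 * lam ^ 2))
        ≤ Real.exp (B - d / (2 * lam)) := Real.exp_le_exp.mpr hkey
      _ = Real.exp B * Real.exp (-(d / (2 * lam))) := by
          rw [show B - d / (2 * lam) = B + -(d / (2 * lam)) by ring, Real.exp_add]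
      _ ≤ Real.exp B * (q ^ k + q ^ (M - k)) := by
          apply mul_le_mul_of_nonneg_left _ (Real.exp_pos B).le
          have hmono : Real.exp (-(d / (2 * lam)))
              ≤ Real.exp (-(((min k (M - k) : ℕ) : ℝ) / (2 * lam))) := by
            apply Real.exp_le_exp.mpr
            apply neg_le_neg
            gcongr
          have hqpow : Real.exp (-(((min k (M - k) : ℕ) : ℝ) / (2 * lam)))
              = q ^ (min k (M - k)) := by
            rw [hqdef, ← Real.exp_nat_mul]
            congr 1
            push_cast
            ring
          rw [hqpow] at hmono
          refine hmono.trans ?_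
          rcases min_cases k (M - k) with ⟨hmin, _⟩ | ⟨hmin, _⟩
          · rw [hmin]
            linarith [pow_nonneg hq0 (M - k)]
          · rw [hmin]
            linarith [pow_nonneg hq0 k]
  have hgeom1 : ∑ k ∈ Finset.range M, q ^ k ≤ 1 / (1 - q) := geom_bound q hq0 hq1 M
  have hgeom2 : ∑ k ∈ Finset.range M, q ^ (M - k) ≤ 1 / (1 - q) :=
    geom_reflect_bound q hq0 hq1 M
  -- 1/(1-q) ≤ 2 lam + 1
  have hfrac : 1 / (1 - q) ≤ 2 * lam + 1 := by
    have hx : (0:ℝ) < 1 / (2 * lam) := by positivity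
    have he : 1 / (2 * lam) + 1 ≤ Real.exp (1 / (2 * lam)) := Real.add_one_le_exp _
    have hqle : q ≤ 1 / (1 / (2 * lam) + 1) := by
      rw [hqdef, Real.exp_neg]
      rw [one_div (1 / (2 * lam) + 1)]
      exact inv_anti₀ (by linarith) he
    have hval : (1:ℝ) / (1 / (2 * lam) + 1) = 1 - 1 / (2 * lam + 1) := by
      field_simp
      ring
    have h1q : 1 / (2 * lam + 1) ≤ 1 - q := by
      rw [hval] at hqle
      linarith
    have h1qpos : (0:ℝ) < 1 - q := by linarith
    rw [div_le_iff₀ h1qpos]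
    have hpos : (0:ℝ) < 2 * lam + 1 := by linarith
    have hid : (2 * lam + 1) * (1 / (2 * lam + 1)) = 1 := by field_simp
    nlinarith [mul_le_mul_of_nonneg_left h1q hpos.le, hid]
  have hSub : S ≤ Real.exp B * (4 * (1 + lam)) := by
    have hsum : S ≤ ∑ k ∈ Finset.range M, Real.exp B * (q ^ k + q ^ (M - k)) := by
      rw [hSdef, Spart]
      exact Finset.sum_le_sum hterm_ub
    have : ∑ k ∈ Finset.range M, Real.exp B * (q ^ k + q ^ (M - k))
        = Real.exp B * ((∑ k ∈ Finset.range M, q ^ k)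
          + ∑ k ∈ Finset.range M, q ^ (M - k)) := by
      rw [← Finset.sum_add_distrib, Finset.mul_sum]
    rw [this] at hsum
    have hB0 : (0:ℝ) < Real.exp B := Real.exp_pos _
    calc S ≤ Real.exp B * ((∑ k ∈ Finset.range M, q ^ k)
          + ∑ k ∈ Finset.range M, q ^ (M - k)) := hsum
      _ ≤ Real.exp B * (2 / (1 - q)) := by
          apply mul_le_mul_of_nonneg_left _ hB0.le
          have := hgeom1
          have := hgeom2
          rw [show (2:ℝ) / (1 - q) = 1 / (1 - q) + 1 / (1 - q) by ring]
          linarith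
      _ ≤ Real.exp B * (4 * (1 + lam)) := by
          apply mul_le_mul_of_nonneg_left _ hB0.le
          rw [show (2:ℝ) / (1 - q) = 2 * (1 / (1 - q)) by ring]
          nlinarith [hfrac]
  -- log upper bound
  have hlogup : Real.log S - Real.log (1 + lam) ≤ 4 * (1 + ‖N‖ ^ 2) := by
    have h1lam : (0:ℝ) < 1 + lam := by linarith
    have hlogS : Real.log S ≤ B + (Real.log 4 + Real.log (1 + lam)) := by
      calc Real.log S ≤ Real.log (Real.exp B * (4 * (1 + lam))) :=
            Real.log_le_log hSpos hSub
        _ = B + (Real.log 4 + Real.log (1 + lam)) := by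
            rw [Real.log_mul (Real.exp_ne_zero B) (by positivity),
              Real.log_exp, Real.log_mul (by norm_num) (ne_of_gt h1lam)]
    have hlog4 : Real.log 4 ≤ 3 := by
      have := Real.log_le_sub_one_of_pos (show (0:ℝ) < 4 by norm_num)
      linarith
    have hBle : B ≤ ‖N‖ ^ 2 + 1 / 4 := by
      rw [hBdef]
      nlinarith [sq_nonneg (‖N‖ - 1 / 2)]
    nlinarith [sq_nonneg ‖N‖]
  -- log lower bound
  have hloglow : Real.log (1 + lam) - Real.log S ≤ 4 * (1 + ‖N‖ ^ 2) := by
    have h1lam : (0:ℝ) < 1 + lam := by linarith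
    rcases le_or_gt lam 1 with hl | hl
    · have hlogS0 : 0 ≤ Real.log S := Real.log_nonneg hS1
      have : Real.log (1 + lam) ≤ 1 := by
        have := Real.log_le_sub_one_of_pos h1lam
        linarith
      nlinarith [sq_nonneg ‖N‖]
    · -- lam > 1
      set n : ℕ := Nat.floor lam with hndef
      have hn_le : (n:ℝ) ≤ lam := Nat.floor_le hlam.le
      have hn_gt : lam < (n:ℝ) + 1 := Nat.lt_floor_add_one lam
      have hsubM : n + 1 ≤ M := by
        have : (n:ℝ) + 1 < (M:ℝ) := by linarith [hlamM, hn_le, hM6]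
        have h2 : ((n + 1 : ℕ) : ℝ) < (M : ℝ) := by push_cast; linarith
        exact_mod_cast h2.le
      have hterm_lb : ∀ k ∈ Finset.range (n + 1),
          Real.exp (-2 - 2 * ‖N‖)
            ≤ Real.exp (-(‖circpt r M 0 - circpt r M k‖ ^ 2
              + 2 * lam * ⟪N, circpt r M 0 - circpt r M k⟫) / (2 * lam ^ 2)) := by
        intro k hk
        have hkn : k ≤ n := Nat.lt_succ_iff.mp (Finset.mem_range.mp hk)
        have hklam : (k:ℝ) ≤ lam := le_trans (by exact_mod_cast hkn) hn_le
        have hkM : k ≤ M := le_trans (le_trans hkn (Nat.le_succ n)) hsubM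
        set d : ℝ := ‖circpt r M 0 - circpt r M k‖ with hddef
        set I : ℝ := ⟪N, circpt r M 0 - circpt r M k⟫ with hIdef
        have hd0 : 0 ≤ d := norm_nonneg _
        have hd2k : d ≤ 2 * k := circpt_norm_le r hr k hkM
        have hd2lam : d ≤ 2 * lam := by linarith
        have hI : I ≤ ‖N‖ * d := real_inner_le_norm N _
        apply Real.exp_le_exp.mpr
        rw [le_div_iff₀ hlam2]
        have hprod : 2 * lam * I ≤ 2 * lam * (‖N‖ * d) := by nlinarith [hI, hlam]
        have hNd : ‖N‖ * d ≤ ‖N‖ * (2 * lam) := by nlinarith [hNnn, hd2lam]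
        nlinarith [hprod, hNd, hd0, hd2lam, hlam, hNnn]
      have hSlow : ((n:ℝ) + 1) * Real.exp (-2 - 2 * ‖N‖) ≤ S := by
        have hsub : ∑ k ∈ Finset.range (n + 1),
            Real.exp (-(‖circpt r M 0 - circpt r M k‖ ^ 2
              + 2 * lam * ⟪N, circpt r M 0 - circpt r M k⟫) / (2 * lam ^ 2)) ≤ S := by
          rw [hSdef, Spart]
          apply Finset.sum_le_sum_of_subset_of_nonneg
          · exact Finset.range_subset_range.mpr hsubM
          · intro k _ _
            exact (Real.exp_pos _).le
        have hconst : ((n:ℝ) + 1) * Real.exp (-2 - 2 * ‖N‖)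
            = ∑ _k ∈ Finset.range (n + 1), Real.exp (-2 - 2 * ‖N‖) := by
          rw [Finset.sum_const, Finset.card_range]
          push_cast
          ring
        rw [hconst]
        exact le_trans (Finset.sum_le_sum hterm_lb) hsub
      have hP : (1 + lam) / 2 * Real.exp (-2 - 2 * ‖N‖) ≤ S := by
        refine le_trans ?_ hSlow
        apply mul_le_mul_of_nonneg_right _ (Real.exp_pos _).le
        linarith
      have hPpos : (0:ℝ) < (1 + lam) / 2 * Real.exp (-2 - 2 * ‖N‖) := by positivity
      have hlogP : Real.log ((1 + lam) / 2 * Real.exp (-2 - 2 * ‖N‖))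
          = Real.log (1 + lam) - Real.log 2 + (-2 - 2 * ‖N‖) := by
        rw [Real.log_mul (ne_of_gt (by positivity)) (Real.exp_ne_zero _),
          Real.log_div (ne_of_gt h1lam) (by norm_num), Real.log_exp]
      have hlogS : Real.log (1 + lam) - Real.log 2 + (-2 - 2 * ‖N‖) ≤ Real.log S := by
        rw [← hlogP]
        exact Real.log_le_log hPpos hP
      have hlog2 : Real.log 2 ≤ 1 := by
        have := Real.log_le_sub_one_of_pos (show (0:ℝ) < 2 by norm_num)
        linarith
      nlinarith [sq_nonneg (‖N‖ - 1)]
  rw [abs_sub_le_iff]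
  exact ⟨hlogup, hloglow⟩
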